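/- Both the projection problem inf_{μ ∈ 𝓜} 𝕎₁(μ, ν) and the equivalent linear program inf_{M ∈ Π} ⟨M, D⟩_F admit minimizers. Moreover, if M* minimizes ⟨·, D⟩_F over Π, then μ* = M*𝟙 − ν⁻ minimizes 𝕎₁(·, ν) over 𝓜; conversely, any minimizer μ* of 𝕎₁(·, ν) over 𝓜 admits an optimal coupling M* ∈ Γ(μ* + ν⁻, ν⁺) minimizing ⟨·, D⟩_F over Π. -/

import Mathlib

open Finset

/-- Frobenius inner product of two `N × N` real matrices. -/
noncomputable def frob (N : ℕ) (M D : Matrix (Fin N) (Fin N) ℝ) : ℝ :=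
  ∑ p, ∑ q, M p q * D p q

/-- Couplings between two nonnegative vectors (of equal total mass). -/
def coupl (N : ℕ) (a b : Fin N → ℝ) : Set (Matrix (Fin N) (Fin N) ℝ) :=
  {M | (∀ p q, 0 ≤ M p q) ∧ (∀ p, ∑ q, M p q = a p) ∧ (∀ q, ∑ p, M p q = b q)}

/-- `𝕎₁(μ,ν)` for `μ ≥ 0` in the discrete setting: infimal transport cost between
`μ + ν⁻` and `ν⁺`. -/
noncomputable def WW1d (N : ℕ) (D : Matrix (Fin N) (Fin N) ℝ)
    (νp νm μ : Fin N → ℝ) : ℝ :=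
  sInf {c : ℝ | ∃ M ∈ coupl N (μ + νm) νp, c = frob N M D}

lemma frob_cont (N : ℕ) (D : Matrix (Fin N) (Fin N) ℝ) :
    Continuous fun M : Matrix (Fin N) (Fin N) ℝ => frob N M D := by
  unfold frob
  exact continuous_finset_sum _ fun p _ => continuous_finset_sum _ fun q _ =>
    Continuous.mul (f := fun M : Matrix (Fin N) (Fin N) ℝ => M p q)
      ((continuous_apply q).comp (continuous_apply p)) continuous_const

lemma capp_cont (N : ℕ) (p q : Fin N) :
    Continuous fun M : Matrix (Fin N) (Fin N) ℝ => M p q :=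
  (continuous_apply q).comp (continuous_apply p)

lemma coupl_isClosed (N : ℕ) (a b : Fin N → ℝ) : IsClosed (coupl N a b) := by
  have he : coupl N a b =
      (⋂ p, ⋂ q, {M : Matrix (Fin N) (Fin N) ℝ | 0 ≤ M p q}) ∩
      ((⋂ p, {M : Matrix (Fin N) (Fin N) ℝ | ∑ q, M p q = a p}) ∩
       (⋂ q, {M : Matrix (Fin N) (Fin N) ℝ | ∑ p, M p q = b q})) := by
    ext M; simp [coupl, Set.mem_iInter]
  rw [he]
  exact ((isClosed_iInter fun p => isClosed_iInter fun q =>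
      isClosed_le continuous_const (capp_cont N p q))).inter
    (((isClosed_iInter fun p => isClosed_eq
        (continuous_finset_sum _ fun q _ => capp_cont N p q) continuous_const)).inter
     ((isClosed_iInter fun q => isClosed_eq
        (continuous_finset_sum _ fun p _ => capp_cont N p q) continuous_const)))

lemma coupl_isCompact (N : ℕ) (a b : Fin N → ℝ) (ha : ∀ p, 0 ≤ a p) :
    IsCompact (coupl N a b) := by
  have hK : IsCompact (Set.univ.pi fun p : Fin N =>
      Set.univ.pi fun _ : Fin N => Set.Icc (0:ℝ) (a p)) :=
    isCompact_univ_pi fun p => isCompact_univ_pi fun _ => isCompact_Icc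
  refine hK.of_isClosed_subset (coupl_isClosed N a b) ?_
  rintro M ⟨hpos, hrow, -⟩
  intro p _
  intro q _
  refine ⟨hpos p q, ?_⟩
  rw [← hrow p]
  exact Finset.single_le_sum (fun i _ => hpos p i) (Finset.mem_univ q)

lemma coupl_nonempty (N : ℕ) (a b : Fin N → ℝ) (ha : ∀ p, 0 ≤ a p) (hb : ∀ q, 0 ≤ b q)
    (hsum : ∑ p, a p = ∑ q, b q) (hpos : 0 < ∑ q, b q) :
    (coupl N a b).Nonempty := by
  refine ⟨fun p q => a p * b q / (∑ q, b q), fun p q => ?_, fun p => ?_, fun q => ?_⟩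
  · have := ha p; have := hb q; positivity
  · rw [← Finset.sum_div, ← Finset.mul_sum, mul_div_assoc, div_self hpos.ne', mul_one]
  · rw [← Finset.sum_div, ← Finset.sum_mul, hsum, mul_comm, mul_div_assoc,
      div_self hpos.ne', mul_one]

lemma WW1d_set_eq (N : ℕ) (D : Matrix (Fin N) (Fin N) ℝ) (νp a : Fin N → ℝ) :
    {c : ℝ | ∃ M ∈ coupl N a νp, c = frob N M D} =
      (fun M => frob N M D) '' coupl N a νp := by
  ext c
  constructor
  · rintro ⟨M, hM, rfl⟩; exact ⟨M, hM, rfl⟩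
  · rintro ⟨M, hM, rfl⟩; exact ⟨M, hM, rfl⟩

theorem existence_of_minimizers
    (N L : ℕ) (A : Matrix (Fin L) (Fin N) ℝ) (b : Fin L → ℝ)
    (D : Matrix (Fin N) (Fin N) ℝ)
    (νp νm : Fin N → ℝ)
    (hνm : ∀ p, 0 < νm p) (hνp : ∀ p, 0 ≤ νp p)
    (hmass : ∑ p, νp p = 1 + ∑ p, νm p)
    (Mset : Set (Fin N → ℝ))
    (hMset : Mset = {μ | (∀ p, 0 ≤ μ p) ∧ A.mulVec μ = b})
    (hsum1 : ∀ μ ∈ Mset, ∑ p, μ p = 1)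
    (hne : Mset.Nonempty)
    (Pi' : Set (Matrix (Fin N) (Fin N) ℝ))
    (hPi : Pi' = {M | ∃ μ ∈ Mset, M ∈ coupl N (μ + νm) νp}) :
    (∃ μ ∈ Mset, ∀ μ' ∈ Mset, WW1d N D νp νm μ ≤ WW1d N D νp νm μ') ∧
    (∃ M ∈ Pi', ∀ M' ∈ Pi', frob N M D ≤ frob N M' D) ∧
    (∀ M ∈ Pi', (∀ M' ∈ Pi', frob N M D ≤ frob N M' D) →
      (fun p => (∑ q, M p q) - νm p) ∈ Mset ∧
      ∀ μ' ∈ Mset, WW1d N D νp νm (fun p => (∑ q, M p q) - νm p) ≤ WW1d N D νp νm μ') ∧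
    (∀ μ ∈ Mset, (∀ μ' ∈ Mset, WW1d N D νp νm μ ≤ WW1d N D νp νm μ') →
      ∃ M ∈ coupl N (μ + νm) νp, ∀ M' ∈ Pi', frob N M D ≤ frob N M' D) := by
  -- basic mass facts
  have hSpos : 0 < ∑ q, νp q := by
    have h0 : (0:ℝ) ≤ ∑ p, νm p := Finset.sum_nonneg fun p _ => (hνm p).le
    rw [hmass]; linarith
  have hmass' : ∀ μ ∈ Mset, ∑ p, (μ + νm) p = ∑ q, νp q := by
    intro μ hμ
    calc ∑ p, (μ + νm) p = ∑ p, μ p + ∑ p, νm p := by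
            simp [Finset.sum_add_distrib]
      _ = 1 + ∑ p, νm p := by rw [hsum1 μ hμ]
      _ = ∑ q, νp q := hmass.symm
  have hann : ∀ μ ∈ Mset, ∀ p, 0 ≤ (μ + νm) p := by
    intro μ hμ p
    rw [hMset] at hμ
    exact add_nonneg (hμ.1 p) (hνm p).le
  have hcne : ∀ μ ∈ Mset, (coupl N (μ + νm) νp).Nonempty := fun μ hμ =>
    coupl_nonempty N _ _ (hann μ hμ) hνp (hmass' μ hμ) hSpos
  have hccomp : ∀ μ ∈ Mset, IsCompact (coupl N (μ + νm) νp) := fun μ hμ =>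
    coupl_isCompact N _ _ (hann μ hμ)
  -- Mset is closed
  have hMclosed : IsClosed Mset := by
    rw [hMset]
    have h1 : IsClosed {μ : Fin N → ℝ | ∀ p, 0 ≤ μ p} := by
      have he : {μ : Fin N → ℝ | ∀ p, 0 ≤ μ p} = ⋂ p, {μ | 0 ≤ μ p} := by
        ext μ; simp
      rw [he]
      exact isClosed_iInter fun p => isClosed_le continuous_const (continuous_apply p)
    have hc : Continuous fun μ : Fin N → ℝ => A.mulVec μ := by
      refine continuous_pi fun i => ?_
      simp only [Matrix.mulVec, dotProduct]
      exact continuous_finset_sum _ fun j _ => continuous_const.mul (continuous_apply j)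
    have h2 : IsClosed {μ : Fin N → ℝ | A.mulVec μ = b} :=
      isClosed_eq hc continuous_const
    exact h1.inter h2
  -- alternative description of Pi'
  have hPi2 : Pi' = {M : Matrix (Fin N) (Fin N) ℝ | (∀ p q, 0 ≤ M p q) ∧
      (∀ q, ∑ p, M p q = νp q) ∧ (fun p => (∑ q, M p q) - νm p) ∈ Mset} := by
    rw [hPi]; ext M
    constructor
    · rintro ⟨μ, hμ, hpos, hrow, hcol⟩
      refine ⟨hpos, hcol, ?_⟩
      have he : (fun p => (∑ q, M p q) - νm p) = μ := by
        funext p; rw [hrow p]; simp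
      rw [he]; exact hμ
    · rintro ⟨hpos, hcol, hμ⟩
      exact ⟨_, hμ, hpos, fun p => by simp, hcol⟩
  -- Pi' is closed, compact, nonempty
  have hPiclosed : IsClosed Pi' := by
    rw [hPi2]
    have h1 : IsClosed {M : Matrix (Fin N) (Fin N) ℝ | ∀ p q, 0 ≤ M p q} := by
      have he : {M : Matrix (Fin N) (Fin N) ℝ | ∀ p q, 0 ≤ M p q} =
          ⋂ p, ⋂ q, {M : Matrix (Fin N) (Fin N) ℝ | 0 ≤ M p q} := by
        ext M; simp
      rw [he]
      exact isClosed_iInter fun p => isClosed_iInter fun q =>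
        isClosed_le continuous_const (capp_cont N p q)
    have h2 : IsClosed {M : Matrix (Fin N) (Fin N) ℝ | ∀ q, ∑ p, M p q = νp q} := by
      have he : {M : Matrix (Fin N) (Fin N) ℝ | ∀ q, ∑ p, M p q = νp q} =
          ⋂ q, {M : Matrix (Fin N) (Fin N) ℝ | ∑ p, M p q = νp q} := by
        ext M; simp
      rw [he]
      exact isClosed_iInter fun q => isClosed_eq
        (continuous_finset_sum _ fun p _ => capp_cont N p q) continuous_const
    have h3 : IsClosed {M : Matrix (Fin N) (Fin N) ℝ |
        (fun p => (∑ q, M p q) - νm p) ∈ Mset} := by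
      have hc : Continuous fun M : Matrix (Fin N) (Fin N) ℝ =>
          (fun p => (∑ q, M p q) - νm p) :=
        continuous_pi fun p =>
          (continuous_finset_sum _ fun q _ => capp_cont N p q).sub continuous_const
      exact hMclosed.preimage hc
    exact h1.inter (h2.inter h3)
  have hPicomp : IsCompact Pi' := by
    have hK : IsCompact (Set.univ.pi fun _ : Fin N =>
        Set.univ.pi fun q : Fin N => Set.Icc (0:ℝ) (νp q)) :=
      isCompact_univ_pi fun _ => isCompact_univ_pi fun q => isCompact_Icc
    refine hK.of_isClosed_subset hPiclosed ?_
    intro M hM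
    rw [hPi2] at hM
    obtain ⟨hpos, hcol, -⟩ := hM
    intro p _ q _
    refine ⟨hpos p q, ?_⟩
    rw [← hcol q]
    exact Finset.single_le_sum (fun i _ => hpos i q) (Finset.mem_univ p)
  have hPine : Pi'.Nonempty := by
    obtain ⟨μ0, hμ0⟩ := hne
    obtain ⟨M0, hM0⟩ := hcne μ0 hμ0
    rw [hPi]
    exact ⟨M0, μ0, hμ0, hM0⟩
  -- minimizer of the linear program
  obtain ⟨Mstar, hMstar, hMmin0⟩ :=
    hPicomp.exists_isMinOn hPine (frob_cont N D).continuousOn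
  have hMmin : ∀ M' ∈ Pi', frob N Mstar D ≤ frob N M' D := fun M' h => hMmin0 h
  -- key correspondence (part 3)
  have key : ∀ M ∈ Pi', (∀ M' ∈ Pi', frob N M D ≤ frob N M' D) →
      (fun p => (∑ q, M p q) - νm p) ∈ Mset ∧
      ∀ μ' ∈ Mset, WW1d N D νp νm (fun p => (∑ q, M p q) - νm p) ≤ WW1d N D νp νm μ' := by
    intro M hM hmin
    have hM2 := hM
    rw [hPi2] at hM2
    obtain ⟨hpos, hcol, hμ⟩ := hM2
    refine ⟨hμ, ?_⟩
    have hMc : M ∈ coupl N ((fun p => (∑ q, M p q) - νm p) + νm) νp :=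
      ⟨hpos, fun p => by simp, hcol⟩
    have hlow : ∀ μ' ∈ Mset,
        ∀ c ∈ {c : ℝ | ∃ M' ∈ coupl N (μ' + νm) νp, c = frob N M' D},
          frob N M D ≤ c := by
      rintro μ' hμ' c ⟨M', hM', rfl⟩
      exact hmin M' (by rw [hPi]; exact ⟨μ', hμ', hM'⟩)
    intro μ' hμ'
    have h1 : WW1d N D νp νm (fun p => (∑ q, M p q) - νm p) ≤ frob N M D := by
      simp only [WW1d]
      exact csInf_le ⟨frob N M D, fun c hc => hlow _ hμ c hc⟩ ⟨M, hMc, rfl⟩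
    have h2 : frob N M D ≤ WW1d N D νp νm μ' := by
      simp only [WW1d]
      refine le_csInf ?_ (hlow μ' hμ')
      obtain ⟨M'', hM''⟩ := hcne μ' hμ'
      exact ⟨frob N M'' D, M'', hM'', rfl⟩
    exact h1.trans h2
  refine ⟨?_, ⟨Mstar, hMstar, hMmin⟩, key, ?_⟩
  · obtain ⟨h1, h2⟩ := key Mstar hMstar hMmin
    exact ⟨_, h1, h2⟩
  · -- part 4
    intro μ hμ hμmin
    obtain ⟨M, hMc, hMmin0'⟩ :=
      (hccomp μ hμ).exists_isMinOn (hcne μ hμ) (frob_cont N D).continuousOn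
    have hMmin' : ∀ M' ∈ coupl N (μ + νm) νp, frob N M D ≤ frob N M' D :=
      fun M' h => hMmin0' h
    refine ⟨M, hMc, ?_⟩
    intro M' hM'
    have hM'2 := hM'
    rw [hPi] at hM'2
    obtain ⟨μ', hμ', hM'c⟩ := hM'2
    have hWμ : WW1d N D νp νm μ = frob N M D := by
      simp only [WW1d]
      apply le_antisymm
      · refine csInf_le ⟨frob N M D, ?_⟩ ⟨M, hMc, rfl⟩
        rintro c ⟨M'', hM'', rfl⟩
        exact hMmin' M'' hM''
      · refine le_csInf ⟨frob N M D, M, hMc, rfl⟩ ?_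
        rintro c ⟨M'', hM'', rfl⟩
        exact hMmin' M'' hM''
    have hW' : WW1d N D νp νm μ' ≤ frob N M' D := by
      simp only [WW1d]
      refine csInf_le ?_ ⟨M', hM'c, rfl⟩
      rw [WW1d_set_eq]
      exact ((hccomp μ' hμ').image (frob_cont N D)).bddBelow
    calc frob N M D = WW1d N D νp νm μ := hWμ.symm
      _ ≤ WW1d N D νp νm μ' := hμmin μ' hμ'
      _ ≤ frob N M' D := hW'
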